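/- The projection of K° onto the block-sparsity ball {K : ∑_{i,j} ‖K_{i,j}‖_F ≤ s}, when ∑_{i,j}‖K°_{i,j}‖_F > s and all blocks are nonzero, is given blockwise by P(K°)_{i,j} = max(‖K°_{i,j}‖_F - λ, 0)·K°_{i,j}/‖K°_{i,j}‖_F, where λ is the threshold from the simplex projection of the vector of block norms (‖K°_{i,j}‖_F) onto {t ≥ 0 : ∑ t ≤ s}; i.e., this blockwise soft-thresholding minimizes (1/2)‖K - K°‖_F² subject to ∑_{i,j}‖K_{i,j}‖_F ≤ s. -/

import Mathlib

/-- Projection onto the block-sparsity ball `{K : ∑_{i,j} ‖K_{i,j}‖_F ≤ s}`: with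
`λ > 0` chosen so that `∑_{i,j} max (‖K°_{i,j}‖_F - λ) 0 = s`, blockwise soft
thresholding `P(K°)_{i,j} = max (‖K°_{i,j}‖_F - λ) 0 • K°_{i,j}/‖K°_{i,j}‖_F`
minimizes `(1/2)‖K - K°‖_F²` subject to `∑_{i,j} ‖K_{i,j}‖_F ≤ s`. -/
theorem block_sparsity_projection {I J : Type*} [Fintype I] [Fintype J] {p q : ℕ}
    (Ko : I → J → Matrix (Fin p) (Fin q) ℝ) (s : ℝ) (hs : 0 < s)
    (frob : Matrix (Fin p) (Fin q) ℝ → ℝ)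
    (hfrob : ∀ M, frob M = Real.sqrt (∑ a, ∑ b, (M a b) ^ 2))
    (hKo_ne : ∀ i j, Ko i j ≠ 0)
    (hKo_sum : s < ∑ i, ∑ j, frob (Ko i j))
    (lam : ℝ) (hlam_pos : 0 < lam)
    (hlam : (∑ i, ∑ j, max (frob (Ko i j) - lam) 0) = s)
    (P : I → J → Matrix (Fin p) (Fin q) ℝ)
    (hP : ∀ i j, P i j = (max (frob (Ko i j) - lam) 0 / frob (Ko i j)) • Ko i j) :
    (∑ i, ∑ j, frob (P i j)) ≤ s ∧
      ∀ K : I → J → Matrix (Fin p) (Fin q) ℝ, (∑ i, ∑ j, frob (K i j)) ≤ s →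
        ((1 : ℝ) / 2) * (∑ i, ∑ j, (frob (P i j - Ko i j)) ^ 2) ≤
          ((1 : ℝ) / 2) * ∑ i, ∑ j, (frob (K i j - Ko i j)) ^ 2 := by
  classical
  set e : Matrix (Fin p) (Fin q) ℝ → EuclideanSpace ℝ (Fin p × Fin q) :=
    fun M => WithLp.toLp 2 (fun ab : Fin p × Fin q => M ab.1 ab.2) with he
  have he_norm : ∀ M, frob M = ‖e M‖ := by
    intro M
    rw [hfrob M, EuclideanSpace.norm_eq]
    congr 1
    rw [Fintype.sum_prod_type]
    exact Finset.sum_congr rfl fun a _ => Finset.sum_congr rfl fun b _ => by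
      simp [he, Real.norm_eq_abs, sq_abs]
  have he_sub : ∀ A B, e (A - B) = e A - e B := fun A B => rfl
  have he_smul : ∀ (r : ℝ) A, e (r • A) = r • e A := fun r A => rfl
  have hfrob_nonneg : ∀ M, 0 ≤ frob M := fun M => (he_norm M) ▸ norm_nonneg _
  have hn_pos : ∀ i j, 0 < frob (Ko i j) := by
    intro i j
    rw [he_norm]
    refine norm_pos_iff.mpr ?_
    intro h
    apply hKo_ne i j
    ext a b
    simpa [he] using congrArg (fun v => v (a, b)) h
  have hc_nonneg : ∀ i j, (0:ℝ) ≤ max (frob (Ko i j) - lam) 0 := fun i j => le_max_right _ _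
  have hc_le : ∀ i j, max (frob (Ko i j) - lam) 0 ≤ frob (Ko i j) :=
    fun i j => max_le (by linarith [hlam_pos]) (hn_pos i j).le
  have hfrobP : ∀ i j, frob (P i j) = max (frob (Ko i j) - lam) 0 := by
    intro i j
    rw [hP, he_norm, he_smul, norm_smul, Real.norm_eq_abs, ← he_norm,
      abs_of_nonneg (div_nonneg (hc_nonneg i j) (hn_pos i j).le),
      div_mul_cancel₀ _ (hn_pos i j).ne']
  have hfrobPK : ∀ i j, frob (P i j - Ko i j)
      = frob (Ko i j) - max (frob (Ko i j) - lam) 0 := by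
    intro i j
    have hPK : P i j - Ko i j
        = (max (frob (Ko i j) - lam) 0 / frob (Ko i j) - 1) • Ko i j := by
      rw [hP, sub_smul, one_smul]
    rw [hPK, he_norm, he_smul, norm_smul, Real.norm_eq_abs, ← he_norm,
      abs_of_nonpos (by
        have : max (frob (Ko i j) - lam) 0 / frob (Ko i j) ≤ 1 :=
          (div_le_one (hn_pos i j)).mpr (hc_le i j)
        linarith)]
    rw [neg_sub, sub_mul, one_mul, div_mul_cancel₀ _ (hn_pos i j).ne']
  refine ⟨by simp_rw [hfrobP]; exact hlam.le, ?_⟩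
  intro K hK
  have hkey : ∀ i j,
      (frob (P i j - Ko i j))^2 + 2*lam*(max (frob (Ko i j) - lam) 0 - frob (K i j))
        ≤ (frob (K i j - Ko i j))^2 := by
    intro i j
    have hn := hn_pos i j
    have ht : 0 ≤ frob (K i j) := hfrob_nonneg _
    have habs : |‖e (K i j)‖ - ‖e (Ko i j)‖| ≤ ‖e (K i j) - e (Ko i j)‖ :=
      abs_norm_sub_norm_le _ _
    have hd2 : frob (K i j) - frob (Ko i j) ≤ frob (K i j - Ko i j) := by
      rw [he_norm (K i j), he_norm (Ko i j), he_norm, he_sub]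
      exact (le_abs_self _).trans habs
    have hd1 : frob (Ko i j) - frob (K i j) ≤ frob (K i j - Ko i j) := by
      rw [he_norm (K i j), he_norm (Ko i j), he_norm, he_sub]
      calc ‖e (Ko i j)‖ - ‖e (K i j)‖ = -(‖e (K i j)‖ - ‖e (Ko i j)‖) := by ring
        _ ≤ |‖e (K i j)‖ - ‖e (Ko i j)‖| := neg_le_abs _
        _ ≤ _ := habs
    have hd0 : 0 ≤ frob (K i j - Ko i j) := hfrob_nonneg _
    have hsq : (frob (K i j) - frob (Ko i j))^2 ≤ (frob (K i j - Ko i j))^2 :=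
      sq_le_sq' (by linarith) (by linarith)
    rw [hfrobPK i j]
    rcases le_total (frob (Ko i j)) lam with h | h
    · rw [max_eq_right (by linarith)]
      nlinarith [hsq, mul_nonneg ht (by linarith : (0:ℝ) ≤ lam - frob (Ko i j)),
        sq_nonneg (frob (K i j))]
    · rw [max_eq_left (by linarith)]
      nlinarith [hsq, sq_nonneg (frob (K i j) - (frob (Ko i j) - lam))]
  have hsum : (∑ i, ∑ j, (frob (P i j - Ko i j))^2)
      + 2*lam*(s - ∑ i, ∑ j, frob (K i j))
      ≤ ∑ i, ∑ j, (frob (K i j - Ko i j))^2 := by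
    have h1 : ∑ i, ∑ j, ((frob (P i j - Ko i j))^2
        + 2*lam*(max (frob (Ko i j) - lam) 0 - frob (K i j)))
        ≤ ∑ i, ∑ j, (frob (K i j - Ko i j))^2 :=
      Finset.sum_le_sum fun i _ => Finset.sum_le_sum fun j _ => hkey i j
    calc (∑ i, ∑ j, (frob (P i j - Ko i j))^2)
        + 2*lam*(s - ∑ i, ∑ j, frob (K i j))
        = ∑ i, ∑ j, ((frob (P i j - Ko i j))^2
          + 2*lam*(max (frob (Ko i j) - lam) 0 - frob (K i j))) := by
          simp_rw [Finset.sum_add_distrib, ← Finset.mul_sum, Finset.sum_sub_distrib, hlam]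
      _ ≤ _ := h1
  have hnn : 0 ≤ 2*lam*(s - ∑ i, ∑ j, frob (K i j)) :=
    mul_nonneg (by linarith) (by linarith)
  linarith
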